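/- Under the construction setup with 1 ≤ r ≤ 𝔫, the set of degrees of nonzero polynomials in span_F(B_{r²}) equals D = { t·𝔫 + ℓ : t, ℓ integers with 0 ≤ t ≤ 2(r−1) and 0 ≤ ℓ ≤ r − 1 − ⌈t/2⌉ }. Equivalently, D is the set of degrees of the polynomials in any basis of span_F(B_{r²}) in row echelon form (a basis consisting of polynomials of pairwise distinct degrees). -/

import Mathlib

open Polynomial
open scoped Classical

/-- The set `B_{r²} = {g^i f^j : 0 ≤ i, j ≤ r-1}` of polynomials. -/
def Bset {F : Type*} [Field F] (f g : F[X]) (r : ℕ) : Set F[X] :=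
  {w | ∃ i j : ℕ, i < r ∧ j < r ∧ w = g ^ i * f ^ j}

/-- The echelon-form generating set. -/
def Vset {F : Type*} [Field F] (f g : F[X]) (r : ℕ) : Set F[X] :=
  {w | ∃ t ℓ : ℕ, t ≤ 2 * (r - 1) ∧ ℓ ≤ r - 1 - (t + 1) / 2 ∧
    w = X ^ ℓ * g ^ ((t + 1) / 2) * f ^ (t / 2)}

section Helpers

variable {F : Type*} [Field F]

lemma deg_of_sum (s : Finset F[X]) (c : F[X] → F)
    (h0 : ∀ p ∈ s, p ≠ 0)
    (hinj : ∀ p ∈ s, ∀ q ∈ s, p.natDegree = q.natDegree → p = q)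
    (hne : (∑ p ∈ s, c p • p) ≠ 0) :
    ∃ p ∈ s, (∑ p ∈ s, c p • p).natDegree = p.natDegree := by
  classical
  have hsum : ∑ p ∈ s, c p • p = ∑ p ∈ s.filter (fun p => c p ≠ 0), c p • p := by
    rw [Finset.sum_filter_of_ne]
    intro p hp h hc
    exact h (by rw [hc, zero_smul])
  set s' := s.filter (fun p => c p ≠ 0) with hs'
  have hsub : s' ⊆ s := Finset.filter_subset _ _
  have hne' : s'.Nonempty := by
    rcases Finset.eq_empty_or_nonempty s' with h | h
    · exact absurd (by rw [hsum, h, Finset.sum_empty]) hne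
    · exact h
  obtain ⟨p₀, hp₀s, hp₀max⟩ := Finset.exists_max_image s' (fun p => p.natDegree) hne'
  have hc₀ : c p₀ ≠ 0 := (Finset.mem_filter.1 hp₀s).2
  have hp₀0 : p₀ ≠ 0 := h0 _ (hsub hp₀s)
  have hdeg0 : (c p₀ • p₀).degree = p₀.degree := by
    rw [smul_eq_C_mul, degree_mul, degree_C hc₀, zero_add]
  have htail : (∑ q ∈ s'.erase p₀, c q • q).degree < p₀.degree := by
    refine lt_of_le_of_lt (degree_sum_le _ _) ?_
    rw [Finset.sup_lt_iff (bot_lt_iff_ne_bot.2 (fun h => hp₀0 (degree_eq_bot.1 h)))]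
    intro q hq
    have hqs' := Finset.mem_of_mem_erase hq
    have hqne : q ≠ p₀ := Finset.ne_of_mem_erase hq
    have hq0 : q ≠ 0 := h0 _ (hsub hqs')
    have hlt : q.natDegree < p₀.natDegree :=
      lt_of_le_of_ne (hp₀max q hqs')
        (fun h => hqne (hinj _ (hsub hqs') _ (hsub hp₀s) h))
    calc (c q • q).degree ≤ q.degree := degree_smul_le _ _
      _ < p₀.degree := degree_lt_degree hlt
  have hsplit : (∑ p ∈ s', c p • p) = c p₀ • p₀ + ∑ q ∈ s'.erase p₀, c q • q :=
    (Finset.add_sum_erase _ _ hp₀s).symm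
  have hdsum : (∑ p ∈ s', c p • p).degree = p₀.degree := by
    rw [hsplit, degree_add_eq_left_of_degree_lt (by rw [hdeg0]; exact htail), hdeg0]
  exact ⟨p₀, hsub hp₀s, by rw [hsum]; exact natDegree_eq_of_degree_eq hdsum⟩

lemma mem_Vset_direct {f g : F[X]} {r ℓ a b : ℕ} (hba : b ≤ a) (hab : a ≤ b + 1)
    (hla : ℓ + a ≤ r - 1) (hlb : ℓ + b ≤ r - 1) :
    X ^ ℓ * g ^ a * f ^ b ∈ Vset f g r := by
  refine ⟨a + b, ℓ, by omega, by omega, ?_⟩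
  rw [show (a + b + 1) / 2 = a by omega, show (a + b) / 2 = b by omega]

lemma lemA {f g : F[X]} {r : ℕ} (hgdef : g = X - f) (hr : 1 ≤ r) :
    ∀ ℓ a b : ℕ, ℓ + a ≤ r - 1 → ℓ + b ≤ r - 1 →
      X ^ ℓ * g ^ a * f ^ b ∈ Submodule.span F (Bset f g r) := by
  intro ℓ a b hla hlb
  have hx : (X : F[X]) = f + g := by rw [hgdef]; ring
  have key : X ^ ℓ * g ^ a * f ^ b
      = ∑ i ∈ Finset.range (ℓ + 1), (ℓ.choose i) • (g ^ (ℓ - i + a) * f ^ (i + b)) := by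
    rw [hx, add_pow, Finset.sum_mul, Finset.sum_mul]
    refine Finset.sum_congr rfl (fun i hi => ?_)
    rw [nsmul_eq_mul, pow_add, pow_add]
    ring
  rw [key]
  refine Submodule.sum_mem _ (fun i hi => ?_)
  have hi' : i ≤ ℓ := by
    have := Finset.mem_range.1 hi; omega
  have hmem : g ^ (ℓ - i + a) * f ^ (i + b) ∈ Bset f g r :=
    ⟨ℓ - i + a, i + b, by omega, by omega, rfl⟩
  exact nsmul_mem (Submodule.subset_span hmem) _

lemma lemB {f g : F[X]} {r : ℕ} (hgdef : g = X - f) (hr : 1 ≤ r) :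
    ∀ m ℓ a b : ℕ, 2 * (a - b) + 3 * (b - a) ≤ m → ℓ + a ≤ r - 1 → ℓ + b ≤ r - 1 →
      X ^ ℓ * g ^ a * f ^ b ∈ Submodule.span F (Vset f g r) := by
  intro m
  induction m with
  | zero =>
    intro ℓ a b hm hla hlb
    have hab : a = b := by omega
    subst hab
    exact Submodule.subset_span (mem_Vset_direct le_rfl (by omega) hla hlb)
  | succ m ih =>
    intro ℓ a b hm hla hlb
    by_cases h1 : b ≤ a ∧ a ≤ b + 1
    · exact Submodule.subset_span (mem_Vset_direct h1.1 h1.2 hla hlb)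
    by_cases h2 : b = a + 1
    · subst h2
      have key : X ^ ℓ * g ^ a * f ^ (a + 1)
          = X ^ (ℓ + 1) * g ^ a * f ^ a - X ^ ℓ * g ^ (a + 1) * f ^ a := by
        rw [hgdef]; ring
      rw [key]
      exact Submodule.sub_mem _
        (ih (ℓ + 1) a a (by omega) (by omega) (by omega))
        (ih ℓ (a + 1) a (by omega) (by omega) (by omega))
    · rcases le_or_gt b a with hba | hba
      · obtain ⟨k, rfl⟩ : ∃ k, a = b + 2 + k := ⟨a - (b + 2), by omega⟩
        have key : X ^ ℓ * g ^ (b + 2 + k) * f ^ b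
            = X ^ (ℓ + 1) * g ^ (b + 1 + k) * f ^ b
              - X ^ ℓ * g ^ (b + 1 + k) * f ^ (b + 1) := by
          rw [hgdef]; ring
        rw [key]
        exact Submodule.sub_mem _
          (ih (ℓ + 1) (b + 1 + k) b (by omega) (by omega) (by omega))
          (ih ℓ (b + 1 + k) (b + 1) (by omega) (by omega) (by omega))
      · obtain ⟨k, rfl⟩ : ∃ k, b = a + 2 + k := ⟨b - (a + 2), by omega⟩
        have key : X ^ ℓ * g ^ a * f ^ (a + 2 + k)
            = X ^ (ℓ + 1) * g ^ a * f ^ (a + 1 + k)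
              - X ^ ℓ * g ^ (a + 1) * f ^ (a + 1 + k) := by
          rw [hgdef]; ring
        rw [key]
        exact Submodule.sub_mem _
          (ih (ℓ + 1) a (a + 1 + k) (by omega) (by omega) (by omega))
          (ih ℓ (a + 1) (a + 1 + k) (by omega) (by omega) (by omega))

lemma spanBV {f g : F[X]} {r : ℕ} (hgdef : g = X - f) (hr : 1 ≤ r) :
    Submodule.span F (Bset f g r) = Submodule.span F (Vset f g r) := by
  refine le_antisymm (Submodule.span_le.2 ?_) (Submodule.span_le.2 ?_)
  · rintro w ⟨i, j, hi, hj, rfl⟩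
    have hw : (g : F[X]) ^ i * f ^ j = X ^ 0 * g ^ i * f ^ j := by
      rw [pow_zero, one_mul]
    rw [hw]
    exact lemB hgdef hr (2 * (i - j) + 3 * (j - i)) 0 i j le_rfl (by omega) (by omega)
  · rintro w ⟨t, ℓ, ht, hl, rfl⟩
    exact lemA hgdef hr ℓ _ _ (by omega) (by omega)

end Helpers

/-- Under the construction setup with `1 ≤ r ≤ 𝔫`, the set of degrees of
nonzero polynomials in `span_F(B_{r²})` equals
`D = { t·𝔫 + ℓ : 0 ≤ t ≤ 2(r-1), 0 ≤ ℓ ≤ r - 1 - ⌈t/2⌉ }`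
(equivalently, the set of degrees of any basis of `span_F(B_{r²})` in row echelon form).
Here `⌈t/2⌉ = (t+1)/2` in natural-number arithmetic. -/
theorem stmt_4 (p e : ℕ) (hp : p.Prime) (he : 0 < e)
    (F : Type*) [Field F] [Fintype F] [CharP F p]
    (f : F[X])
    (hflin : ∀ m ∈ f.support, ∃ i : ℕ, m = (p ^ e) ^ i)
    (hdeg : 1 < f.natDegree)
    (ha0 : f.coeff 1 ≠ 0) (ha1 : f.coeff 1 ≠ 1)
    (g : F[X]) (hg : g = X - f)
    (hfs : (f.map (RingHom.id F)).Splits) (hgs : (g.map (RingHom.id F)).Splits)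
    (r : ℕ) (hr : 1 ≤ r) (hrn : r ≤ f.natDegree) :
    {d : ℕ | ∃ w ∈ Submodule.span F (Bset f g r), w ≠ 0 ∧ w.natDegree = d} =
      {d : ℕ | ∃ t ℓ : ℕ, t ≤ 2 * (r - 1) ∧ ℓ ≤ r - 1 - (t + 1) / 2 ∧
        d = t * f.natDegree + ℓ} := by
  classical
  have hf0 : f ≠ 0 := fun h => by simp [h] at hdeg
  have hgdeg : g.natDegree = f.natDegree := by
    rw [hg]
    exact natDegree_sub_eq_right_of_natDegree_lt (by simpa using hdeg)
  have hg0 : g ≠ 0 := fun h => by rw [h, natDegree_zero] at hgdeg; omega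
  have hv0 : ∀ ℓ a b : ℕ, (X ^ ℓ * g ^ a * f ^ b : F[X]) ≠ 0 := fun ℓ a b =>
    mul_ne_zero (mul_ne_zero (pow_ne_zero _ X_ne_zero) (pow_ne_zero _ hg0))
      (pow_ne_zero _ hf0)
  have hdegv : ∀ ℓ a b : ℕ, (X ^ ℓ * g ^ a * f ^ b : F[X]).natDegree
      = (a + b) * f.natDegree + ℓ := by
    intro ℓ a b
    rw [natDegree_mul (mul_ne_zero (pow_ne_zero _ X_ne_zero) (pow_ne_zero _ hg0))
        (pow_ne_zero _ hf0),
      natDegree_mul (pow_ne_zero _ X_ne_zero) (pow_ne_zero _ hg0),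
      natDegree_pow, natDegree_pow, natDegree_pow, natDegree_X, hgdeg]
    ring
  have hspan := spanBV (F := F) hg hr
  set P : Finset (ℕ × ℕ) :=
    (Finset.range (2 * (r - 1) + 1) ×ˢ Finset.range r).filter
      (fun q => q.2 ≤ r - 1 - (q.1 + 1) / 2) with hP
  set vf : ℕ × ℕ → F[X] := fun q => X ^ q.2 * g ^ ((q.1 + 1) / 2) * f ^ (q.1 / 2) with hvf
  have hVfin : Vset f g r = ↑(P.image vf) := by
    ext w
    simp only [Vset, Set.mem_setOf_eq, Finset.coe_image, Set.mem_image, Finset.mem_coe,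
      hP, Finset.mem_filter, Finset.mem_product, Finset.mem_range]
    constructor
    · rintro ⟨t, ℓ, ht, hl, rfl⟩
      exact ⟨(t, ℓ), ⟨⟨by omega, by omega⟩, hl⟩, rfl⟩
    · rintro ⟨⟨t, ℓ⟩, ⟨⟨ht, hlr⟩, hl⟩, rfl⟩
      exact ⟨t, ℓ, by omega, hl, rfl⟩
  have hdvf : ∀ q : ℕ × ℕ, (vf q).natDegree = q.1 * f.natDegree + q.2 := by
    intro q
    rw [hvf]
    simp only []
    rw [hdegv, show (q.1 + 1) / 2 + q.1 / 2 = q.1 by omega]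
  ext d
  simp only [Set.mem_setOf_eq]
  constructor
  · rintro ⟨w, hw, hw0, rfl⟩
    rw [hspan, hVfin] at hw
    obtain ⟨c, -, hc⟩ := Submodule.mem_span_finset.1 hw
    rw [← hc] at hw0 ⊢
    have h0 : ∀ q ∈ P.image vf, q ≠ 0 := by
      rintro q hq
      obtain ⟨⟨t, ℓ⟩, _, rfl⟩ := Finset.mem_image.1 hq
      exact hv0 _ _ _
    have hinj : ∀ u ∈ P.image vf, ∀ v ∈ P.image vf, u.natDegree = v.natDegree → u = v := by
      rintro u hu v hv huv
      obtain ⟨⟨t, ℓ⟩, htl, rfl⟩ := Finset.mem_image.1 hu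
      obtain ⟨⟨t', ℓ'⟩, htl', rfl⟩ := Finset.mem_image.1 hv
      rw [hdvf, hdvf] at huv
      have hℓr : ℓ < r := (Finset.mem_range.1 (Finset.mem_product.1
        (Finset.mem_filter.1 htl).1).2)
      have hℓ'r : ℓ' < r := (Finset.mem_range.1 (Finset.mem_product.1
        (Finset.mem_filter.1 htl').1).2)
      have hℓn : ℓ < f.natDegree := lt_of_lt_of_le hℓr hrn
      have hℓ'n : ℓ' < f.natDegree := lt_of_lt_of_le hℓ'r hrn
      have hmod : ℓ = ℓ' := by
        have h := congrArg (· % f.natDegree) huv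
        simp only [Nat.mul_add_mod', Nat.mod_eq_of_lt hℓn, Nat.mod_eq_of_lt hℓ'n] at h
        exact h
      subst hmod
      have ht : t = t' := by
        have := Nat.add_right_cancel huv
        exact Nat.eq_of_mul_eq_mul_right (by omega) this
      rw [ht]
    obtain ⟨u, hu, hdu⟩ := deg_of_sum (P.image vf) c h0 hinj hw0
    obtain ⟨⟨t, ℓ⟩, htl, rfl⟩ := Finset.mem_image.1 hu
    have htP := Finset.mem_filter.1 htl
    have htr : t < 2 * (r - 1) + 1 := Finset.mem_range.1 (Finset.mem_product.1 htP.1).1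
    exact ⟨t, ℓ, by omega, htP.2, by rw [hdu, hdvf]⟩
  · rintro ⟨t, ℓ, ht, hl, rfl⟩
    refine ⟨X ^ ℓ * g ^ ((t + 1) / 2) * f ^ (t / 2),
      lemA hg hr ℓ _ _ (by omega) (by omega), hv0 _ _ _, ?_⟩
    rw [hdegv, show (t + 1) / 2 + t / 2 = t by omega]
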